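/- Let H be a Hopf algebra over a commutative ring and for a finite subset Φ ⊆ {1,…,n} define δ_Φ := Σ_{Σ'⊆Φ} (−1)^{|Φ|−|Σ'|} Δ_{Σ'}, where Δ_Σ inserts the iterated coproduct into the tensor positions indexed by Σ and 1's elsewhere, and δ_∅ := ε. Then for all a, b ∈ H and any finite Φ, δ_Φ(a·b) = Σ_{Λ∪Y=Φ} δ_Λ(a)·δ_Y(b). -/

import Mathlib

/- STATEMENT 7: multiplicativity of the inclusion–exclusion maps `δ_Φ` in a Hopf algebra:
   `δ_Φ(a·b) = Σ_{Λ∪Y=Φ} δ_Λ(a)·δ_Y(b)`. -/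

open scoped TensorProduct
open PiTensorProduct

section Combinatorics
open Finset
variable {α : Type*} [DecidableEq α]

lemma neg_one_pow_sub' {a b : ℕ} (h : b ≤ a) : ((-1 : ℤ)) ^ (a - b) = (-1) ^ a * (-1) ^ b := by
  have h1 : ((-1 : ℤ)) ^ (a - b) * (-1) ^ b = (-1) ^ a := by
    rw [← pow_add, Nat.sub_add_cancel h]
  have h2 : ((-1 : ℤ)) ^ b * (-1) ^ b = 1 := by
    rw [← pow_add]
    exact Even.neg_one_pow ⟨b, rfl⟩
  calc ((-1 : ℤ)) ^ (a - b) = ((-1 : ℤ)) ^ (a-b) * ((-1) ^ b * (-1)^b) := by rw [h2, mul_one]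
    _ = (((-1 : ℤ)) ^ (a-b) * (-1) ^ b) * (-1)^b := by ring
    _ = (-1) ^ a * (-1) ^ b := by rw [h1]

lemma sign_sum_empty (W : Finset α) :
    ∑ V ∈ W.powerset, ((-1 : ℤ) ^ (W.card - V.card)) = if W = ∅ then 1 else 0 := by
  rw [Finset.sum_congr rfl (fun V hV => neg_one_pow_sub' (card_le_card (mem_powerset.1 hV))),
      ← Finset.mul_sum, Finset.sum_powerset_neg_one_pow_card]
  by_cases h : W = ∅ <;> simp [h]

/-- interval sign sum, version with exponent `|S| - |T|` -/
lemma sign_interval₁ (S U : Finset α) (hU : U ⊆ S) :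
    ∑ T ∈ S.powerset.filter (fun T => U ⊆ T), ((-1 : ℤ) ^ (S.card - T.card))
      = if U = S then 1 else 0 := by
  rw [Finset.sum_nbij' (i := fun T => T \ U) (j := fun V => V ∪ U)
      (t := (S \ U).powerset) (g := fun V => ((-1 : ℤ) ^ ((S \ U).card - V.card)))]
  · rw [sign_sum_empty]
    congr 1
    simp only [sdiff_eq_empty_iff_subset, eq_iff_iff]
    constructor
    · intro h; exact (subset_antisymm hU h)
    · intro h; rw [h]
  · intro T hT
    simp only [mem_filter, mem_powerset] at hT
    exact mem_powerset.2 (sdiff_subset_sdiff hT.1 Subset.rfl)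
  · intro V hV
    simp only [mem_powerset] at hV
    simp only [mem_filter, mem_powerset]
    exact ⟨union_subset (hV.trans (sdiff_subset)) hU, subset_union_right⟩
  · intro T hT
    simp only [mem_filter, mem_powerset] at hT
    exact sdiff_union_of_subset hT.2
  · intro V hV
    simp only [mem_powerset] at hV
    exact union_sdiff_cancel_right (disjoint_of_subset_left hV sdiff_disjoint)
  · intro T hT
    simp only [mem_filter, mem_powerset] at hT
    congr 1
    have h1 : (S \ U).card = S.card - U.card := card_sdiff_of_subset hU
    have h2 : (T \ U).card = T.card - U.card := card_sdiff_of_subset hT.2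
    have := card_le_card hT.1
    have := card_le_card hT.2
    omega

/-- interval sign sum, version with exponent `|T| - |U|` -/
lemma sign_interval₂ (S U : Finset α) (hU : U ⊆ S) :
    ∑ T ∈ S.powerset.filter (fun T => U ⊆ T), ((-1 : ℤ) ^ (T.card - U.card))
      = if U = S then 1 else 0 := by
  rw [Finset.sum_nbij' (i := fun T => T \ U) (j := fun V => V ∪ U)
      (t := (S \ U).powerset) (g := fun V => ((-1 : ℤ) ^ V.card))]
  · rw [Finset.sum_powerset_neg_one_pow_card]
    congr 1
    simp only [sdiff_eq_empty_iff_subset, eq_iff_iff]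
    exact ⟨fun h => subset_antisymm hU h, fun h => h ▸ Subset.rfl⟩
  · intro T hT
    simp only [mem_filter, mem_powerset] at hT
    exact mem_powerset.2 (sdiff_subset_sdiff hT.1 Subset.rfl)
  · intro V hV
    simp only [mem_powerset] at hV
    simp only [mem_filter, mem_powerset]
    exact ⟨union_subset (hV.trans (sdiff_subset)) hU, subset_union_right⟩
  · intro T hT
    simp only [mem_filter, mem_powerset] at hT
    exact sdiff_union_of_subset hT.2
  · intro V hV
    simp only [mem_powerset] at hV
    exact union_sdiff_cancel_right (disjoint_of_subset_left hV sdiff_disjoint)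
  · intro T hT
    simp only [mem_filter, mem_powerset] at hT
    rw [card_sdiff_of_subset hT.2]

/-- Möbius inversion for sums over powersets. -/
lemma powerset_inversion {M : Type*} [AddCommGroup M] (S : Finset α) (f : Finset α → M) :
    ∑ T ∈ S.powerset, ((-1 : ℤ) ^ (S.card - T.card)) • (∑ U ∈ T.powerset, f U) = f S := by
  have hpow : ∀ T ∈ S.powerset, T.powerset = S.powerset.filter (fun U => U ⊆ T) := by
    intro T hT
    ext U
    simp only [mem_powerset, mem_filter]
    exact ⟨fun h => ⟨h.trans (mem_powerset.1 hT), h⟩, fun h => h.2⟩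
  have key : ∀ T ∈ S.powerset,
      ((-1 : ℤ) ^ (S.card - T.card)) • (∑ U ∈ T.powerset, f U)
        = ∑ U ∈ S.powerset, (if U ⊆ T then ((-1 : ℤ) ^ (S.card - T.card)) • f U else 0) := by
    intro T hT
    rw [Finset.smul_sum, hpow T hT, Finset.sum_filter]
  rw [Finset.sum_congr rfl key, Finset.sum_comm]
  have key2 : ∀ U ∈ S.powerset,
      (∑ T ∈ S.powerset, if U ⊆ T then ((-1 : ℤ) ^ (S.card - T.card)) • f U else 0)
        = (if U = S then 1 else (0:ℤ)) • f U := by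
    intro U hU
    have : (∑ T ∈ S.powerset, if U ⊆ T then ((-1 : ℤ) ^ (S.card - T.card)) • f U else 0)
        = ∑ T ∈ S.powerset.filter (fun T => U ⊆ T), ((-1 : ℤ) ^ (S.card - T.card)) • f U := by
      rw [Finset.sum_filter]
    rw [this, ← Finset.sum_smul, sign_interval₁ S U (mem_powerset.1 hU)]
  rw [Finset.sum_congr rfl key2]
  simp only [ite_smul, one_smul, zero_smul]
  rw [Finset.sum_ite_eq' S.powerset S f]
  simp

/-- sum of signed sums recovers the identity: `Σ_{T⊆S} Σ_{U⊆T} (-1)^{|T|-|U|} g U = g S`. -/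
lemma powerset_inversion' {M : Type*} [AddCommGroup M] (S : Finset α) (g : Finset α → M) :
    ∑ T ∈ S.powerset, (∑ U ∈ T.powerset, ((-1 : ℤ) ^ (T.card - U.card)) • g U) = g S := by
  have hpow : ∀ T ∈ S.powerset, T.powerset = S.powerset.filter (fun U => U ⊆ T) := by
    intro T hT
    ext U
    simp only [mem_powerset, mem_filter]
    exact ⟨fun h => ⟨h.trans (mem_powerset.1 hT), h⟩, fun h => h.2⟩
  have key : ∀ T ∈ S.powerset,
      (∑ U ∈ T.powerset, ((-1 : ℤ) ^ (T.card - U.card)) • g U)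
        = ∑ U ∈ S.powerset, (if U ⊆ T then ((-1 : ℤ) ^ (T.card - U.card)) • g U else 0) := by
    intro T hT
    rw [hpow T hT, Finset.sum_filter]
  rw [Finset.sum_congr rfl key, Finset.sum_comm]
  have key2 : ∀ U ∈ S.powerset,
      (∑ T ∈ S.powerset, if U ⊆ T then ((-1 : ℤ) ^ (T.card - U.card)) • g U else 0)
        = (if U = S then 1 else (0:ℤ)) • g U := by
    intro U hU
    have : (∑ T ∈ S.powerset, if U ⊆ T then ((-1 : ℤ) ^ (T.card - U.card)) • g U else 0)
        = ∑ T ∈ S.powerset.filter (fun T => U ⊆ T), ((-1 : ℤ) ^ (T.card - U.card)) • g U := by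
      rw [Finset.sum_filter]
    rw [this, ← Finset.sum_smul, sign_interval₂ S U (mem_powerset.1 hU)]
  rw [Finset.sum_congr rfl key2]
  simp only [ite_smul, one_smul, zero_smul]
  rw [Finset.sum_ite_eq' S.powerset S g]
  simp

end Combinatorics

namespace GQDP

variable (R : Type*) [CommRing R] (H : Type*) [Ring H] [HopfAlgebra R H]

/-- The `n`-fold tensor power `H^{⊗n}`. -/
abbrev TP (n : ℕ) := ⨂[R] (_ : Fin n), H

/-- The canonical map `H ⊗ H^{⊗n} → H^{⊗(n+1)}`. -/
noncomputable def step (n : ℕ) : (H ⊗[R] TP R H n) →ₗ[R] TP R H (n + 1) :=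
  ((PiTensorProduct.reindex R (fun _ : Fin 1 ⊕ Fin n => H)
      (finSumFinEquiv.trans (finCongr (Nat.add_comm 1 n)))).toLinearMap
    ∘ₗ (PiTensorProduct.tmulEquiv (ι := Fin 1) (ι₂ := Fin n) R H).toLinearMap)
    ∘ₗ (LinearMap.rTensor (TP R H n)
      (PiTensorProduct.subsingletonEquiv (0 : Fin 1) : (⨂[R] (_ : Fin 1), H) ≃ₗ[R] H).symm.toLinearMap)

/-- The iterated coproduct `Δⁿ : H → H^{⊗n}`, with `Δ⁰ := ε` and
    `Δ^{n+1} := (id ⊗ Δⁿ) ∘ Δ`. -/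
noncomputable def DeltaIter : (n : ℕ) → H →ₗ[R] TP R H n
  | 0 => (PiTensorProduct.isEmptyEquiv (ι := Fin 0)).symm.toLinearMap
          ∘ₗ (Coalgebra.counit : H →ₗ[R] R)
  | n + 1 => step R H n ∘ₗ LinearMap.lTensor H (DeltaIter n)
              ∘ₗ (Coalgebra.comul : H →ₗ[R] H ⊗[R] H)

/-- The partial iterated coproduct `Δ_Σ = j_Σ ∘ Δ^{|Σ|}`, realized as the full iterated
    coproduct `Δⁿ` followed by applying `η ∘ ε` in every tensor position outside `Σ`
    (and the identity in the positions of `Σ`). -/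
noncomputable def DeltaSub (n : ℕ) (S : Finset (Fin n)) : H →ₗ[R] TP R H n :=
  (PiTensorProduct.map fun i =>
      if i ∈ S then (LinearMap.id : H →ₗ[R] H)
      else Algebra.linearMap R H ∘ₗ (Coalgebra.counit : H →ₗ[R] R))
    ∘ₗ DeltaIter R H n

/-- `δ_Φ := Σ_{Σ'⊆Φ} (−1)^{|Φ|−|Σ'|} Δ_{Σ'}` (in particular `δ_∅ = Δ_∅ = ε`). -/
noncomputable def deltaF (n : ℕ) (Φ : Finset (Fin n)) : H →ₗ[R] TP R H n :=
  ∑ S ∈ Φ.powerset, ((-1 : ℤ) ^ (Φ.card - S.card)) • DeltaSub R H n S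

lemma step_tmul_tprod (n : ℕ) (a : H) (u : Fin n → H) :
    step R H n (a ⊗ₜ[R] tprod R u) =
      tprod R (fun i => Sum.elim (fun _ : Fin 1 => a) u
        ((finSumFinEquiv.trans (finCongr (Nat.add_comm 1 n))).symm i)) := by
  simp only [step, LinearMap.comp_apply, LinearMap.rTensor_tmul, LinearEquiv.coe_coe,
    PiTensorProduct.subsingletonEquiv_symm_apply, PiTensorProduct.tmulEquiv_apply,
    PiTensorProduct.reindex_tprod]
  congr 1
  funext i
  rcases h : (finSumFinEquiv.trans (finCongr (Nat.add_comm 1 n))).symm i with j | j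
  · rw [Subsingleton.elim j 0]; simp [h]
  · simp [h]

lemma step_mul (n : ℕ) (x y : H ⊗[R] TP R H n) :
    step R H n (x * y) = step R H n x * step R H n y := by
  induction x using TensorProduct.induction_on with
  | zero => simp
  | add u v hu hv => rw [add_mul, map_add, map_add, hu, hv, add_mul]
  | tmul a u =>
    induction y using TensorProduct.induction_on with
    | zero => simp
    | add w z hw hz => rw [mul_add, map_add, map_add, hw, hz, mul_add]
    | tmul b v =>
      rw [Algebra.TensorProduct.tmul_mul_tmul]
      induction u using PiTensorProduct.induction_on with
      | add w z hw hz =>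
        rw [add_mul, TensorProduct.tmul_add, TensorProduct.tmul_add, map_add, map_add, hw, hz,
          add_mul]
      | smul_tprod r f =>
        induction v using PiTensorProduct.induction_on with
        | add w z hw hz =>
          rw [mul_add, TensorProduct.tmul_add, TensorProduct.tmul_add, map_add, map_add, hw, hz,
            mul_add]
        | smul_tprod s g =>
          rw [PiTensorProduct.smul_tprod_mul_smul_tprod, TensorProduct.tmul_smul, map_smul,
            TensorProduct.tmul_smul, TensorProduct.tmul_smul, map_smul, map_smul,
            step_tmul_tprod, step_tmul_tprod, step_tmul_tprod,
            smul_mul_smul_comm, PiTensorProduct.tprod_mul_tprod]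
          congr 1
          apply congrArg
          funext i
          rw [Pi.mul_apply]
          rcases h : (finSumFinEquiv.trans (finCongr (Nat.add_comm 1 n))).symm i with j | j <;>
            simp [h]

lemma lTensor_mul (n : ℕ) (g : H →ₗ[R] TP R H n)
    (hg : ∀ x y, g (x * y) = g x * g y) (x y : H ⊗[R] H) :
    LinearMap.lTensor H g (x * y) = LinearMap.lTensor H g x * LinearMap.lTensor H g y := by
  induction x using TensorProduct.induction_on with
  | zero => simp
  | add u v hu hv => rw [add_mul, map_add, map_add, hu, hv, add_mul]
  | tmul a u =>
    induction y using TensorProduct.induction_on with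
    | zero => simp
    | add w z hw hz => rw [mul_add, map_add, map_add, hw, hz, mul_add]
    | tmul b v =>
      rw [Algebra.TensorProduct.tmul_mul_tmul, LinearMap.lTensor_tmul, LinearMap.lTensor_tmul,
        LinearMap.lTensor_tmul, Algebra.TensorProduct.tmul_mul_tmul, hg]

lemma DeltaIter_mul (n : ℕ) (x y : H) :
    DeltaIter R H n (x * y) = DeltaIter R H n x * DeltaIter R H n y := by
  induction n generalizing x y with
  | zero =>
    simp only [DeltaIter, LinearMap.comp_apply, LinearEquiv.coe_coe,
      PiTensorProduct.isEmptyEquiv_symm_apply, Bialgebra.counit_mul]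
    rw [smul_mul_smul_comm, PiTensorProduct.tprod_mul_tprod]
    congr 1
    apply congrArg
    funext i
    exact isEmptyElim i
  | succ n ih =>
    simp only [DeltaIter, LinearMap.comp_apply, Bialgebra.comul_mul]
    rw [lTensor_mul R H n (DeltaIter R H n) (fun a b => ih a b), step_mul]

lemma piMap_mul (n : ℕ) (f : Fin n → (H →ₗ[R] H))
    (hf : ∀ i a b, f i (a * b) = f i a * f i b) (x y : TP R H n) :
    PiTensorProduct.map f (x * y) =
      PiTensorProduct.map f x * PiTensorProduct.map f y := by
  induction x using PiTensorProduct.induction_on with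
  | add u v hu hv => rw [add_mul, map_add, map_add, hu, hv, add_mul]
  | smul_tprod r u =>
    induction y using PiTensorProduct.induction_on with
    | add w z hw hz => rw [mul_add, map_add, map_add, hw, hz, mul_add]
    | smul_tprod s v =>
      rw [PiTensorProduct.smul_tprod_mul_smul_tprod, map_smul, map_smul, map_smul,
        PiTensorProduct.map_tprod, PiTensorProduct.map_tprod, PiTensorProduct.map_tprod,
        smul_mul_smul_comm, PiTensorProduct.tprod_mul_tprod]
      congr 1
      apply congrArg
      funext i
      rw [Pi.mul_apply, Pi.mul_apply, hf]

lemma DeltaSub_mul (n : ℕ) (S : Finset (Fin n)) (x y : H) :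
    DeltaSub R H n S (x * y) = DeltaSub R H n S x * DeltaSub R H n S y := by
  simp only [DeltaSub, LinearMap.comp_apply, DeltaIter_mul]
  apply piMap_mul
  intro i a b
  by_cases h : i ∈ S <;> simp [h, Bialgebra.counit_mul]


lemma sum_deltaF (n : ℕ) (S : Finset (Fin n)) (x : H) :
    ∑ T ∈ S.powerset, deltaF R H n T x = DeltaSub R H n S x := by
  have h : ∀ T : Finset (Fin n), deltaF R H n T x
      = ∑ U ∈ T.powerset, ((-1 : ℤ) ^ (T.card - U.card)) • DeltaSub R H n U x := by
    intro T
    rw [deltaF, LinearMap.sum_apply]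
    exact Finset.sum_congr rfl fun U _ => rfl
  simp only [h]
  exact powerset_inversion' S (fun U => DeltaSub R H n U x)

/-- For all `a, b ∈ H` and every finite `Φ ⊆ {1,…,n}`,
    `δ_Φ(a·b) = Σ_{Λ∪Y=Φ} δ_Λ(a)·δ_Y(b)`. -/
theorem deltaF_mul (a b : H) (n : ℕ) (Φ : Finset (Fin n)) :
    deltaF R H n Φ (a * b) =
      ∑ p ∈ (Φ.powerset ×ˢ Φ.powerset).filter (fun p => p.1 ∪ p.2 = Φ),
        deltaF R H n p.1 a * deltaF R H n p.2 b := by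
  classical
  set G : Finset (Fin n) → TP R H n := fun T =>
    ∑ p ∈ (T.powerset ×ˢ T.powerset).filter (fun p => p.1 ∪ p.2 = T),
      deltaF R H n p.1 a * deltaF R H n p.2 b with hG
  have hmap : ∀ S : Finset (Fin n), ∀ p ∈ S.powerset ×ˢ S.powerset,
      p.1 ∪ p.2 ∈ S.powerset := by
    intro S p hp
    rw [Finset.mem_product, Finset.mem_powerset, Finset.mem_powerset] at hp
    exact Finset.mem_powerset.2 (Finset.union_subset hp.1 hp.2)
  have hDS : ∀ S : Finset (Fin n), DeltaSub R H n S (a * b) = ∑ T ∈ S.powerset, G T := by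
    intro S
    rw [DeltaSub_mul, ← sum_deltaF R H n S a, ← sum_deltaF R H n S b,
      Finset.sum_mul_sum, ← Finset.sum_product',
      ← Finset.sum_fiberwise_of_maps_to (hmap S)
        (fun p => deltaF R H n p.1 a * deltaF R H n p.2 b)]
    apply Finset.sum_congr rfl
    intro T hT
    rw [hG]
    have hT' : T ⊆ S := Finset.mem_powerset.1 hT
    apply Finset.sum_congr _ (fun _ _ => rfl)
    ext p
    simp only [Finset.mem_filter, Finset.mem_product, Finset.mem_powerset]
    constructor
    · rintro ⟨⟨h1, h2⟩, h3⟩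
      exact ⟨⟨h3 ▸ Finset.subset_union_left, h3 ▸ Finset.subset_union_right⟩, h3⟩
    · rintro ⟨⟨h1, h2⟩, h3⟩
      exact ⟨⟨h1.trans hT', h2.trans hT'⟩, h3⟩
  have expand : deltaF R H n Φ (a * b)
      = ∑ S ∈ Φ.powerset, ((-1 : ℤ) ^ (Φ.card - S.card)) • (∑ T ∈ S.powerset, G T) := by
    rw [deltaF, LinearMap.sum_apply]
    apply Finset.sum_congr rfl
    intro S _
    show ((-1 : ℤ) ^ (Φ.card - S.card)) • (DeltaSub R H n S (a * b)) = _
    rw [hDS S]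
  rw [expand, powerset_inversion Φ G]


end GQDP
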